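/- Let $(X,\mu)$ be a measure space, $f : X \to [0,\infty)$ measurable, $p > 1$, and $\lambda \ge 0$. Let $k \in \mathbb{N}$ with $k < p \le k+1$. Then $\int_{\{f > \lambda\}} (f - \lambda)^p\, d\mu \ge \int_{\{f > \lambda\}} (f^p - \lambda^p)\, d\mu - \sum_{j=1}^{k} \binom{p}{j} \lambda^{p-j} \int_{\{f > \lambda\}} (f - \lambda)^j\, d\mu$, where $\binom{p}{j}$ is the generalized binomial coefficient, assuming all integrals are finite. -/

import Mathlib

open MeasureTheory Real Finset NNReal

/-- Generalized binomial coefficient `p choose j` for real `p`. -/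
noncomputable def genBinom (p : ℝ) (j : ℕ) : ℝ :=
  (∏ i ∈ Finset.range j, (p - i)) / (Nat.factorial j)

lemma genBinom_zero (p : ℝ) : genBinom p 0 = 1 := by simp [genBinom]

lemma genBinom_succ_mul (p : ℝ) (j : ℕ) :
    ((j : ℝ) + 1) * genBinom p (j + 1) = p * genBinom (p - 1) j := by
  have h : ∏ i ∈ Finset.range (j + 1), (p - i) =
      (∏ i ∈ Finset.range j, (p - 1 - i)) * p := by
    rw [Finset.prod_range_succ']
    congr 1
    · exact Finset.prod_congr rfl (fun i _ => by push_cast; ring)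
    · simp
  have hfact : (Nat.factorial (j + 1) : ℝ) = ((j : ℝ) + 1) * (Nat.factorial j : ℝ) := by
    rw [Nat.factorial_succ]; push_cast; ring
  have hj : ((j : ℝ) + 1) ≠ 0 := by positivity
  have hf : (Nat.factorial j : ℝ) ≠ 0 := by positivity
  unfold genBinom
  rw [h, hfact]
  field_simp

/-- Real version of `(b+t)^p ≤ b^p + t^p` for `0 ≤ p ≤ 1`. -/
lemma real_rpow_add_le {b t p : ℝ} (hb : 0 ≤ b) (ht : 0 ≤ t) (hp : 0 ≤ p) (hp1 : p ≤ 1) :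
    (b + t) ^ p ≤ b ^ p + t ^ p := by
  have h := NNReal.rpow_add_le_add_rpow b.toNNReal t.toNNReal hp hp1
  calc (b + t) ^ p = ((b.toNNReal + t.toNNReal : ℝ≥0) : ℝ) ^ p := by
        rw [NNReal.coe_add, Real.coe_toNNReal _ hb, Real.coe_toNNReal _ ht]
    _ = (((b.toNNReal + t.toNNReal) ^ p : ℝ≥0) : ℝ) := by rw [NNReal.coe_rpow]
    _ ≤ ((b.toNNReal ^ p + t.toNNReal ^ p : ℝ≥0) : ℝ) := NNReal.coe_le_coe.2 h
    _ = b ^ p + t ^ p := by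
        rw [NNReal.coe_add, NNReal.coe_rpow, NNReal.coe_rpow,
          Real.coe_toNNReal _ hb, Real.coe_toNNReal _ ht]

/-- The key pointwise Taylor-type inequality. -/
lemma key_ineq : ∀ (k : ℕ) (p : ℝ), (k : ℝ) < p → p ≤ k + 1 →
    ∀ b t : ℝ, 0 ≤ b → 0 ≤ t →
    (b + t) ^ p ≤ t ^ p + ∑ j ∈ Finset.range (k + 1),
      genBinom p j * b ^ (p - j) * t ^ (j : ℕ) := by
  intro k
  induction k with
  | zero =>
    intro p hp0 hp1 b t hb ht
    simp only [Nat.cast_zero, zero_add] at hp0 hp1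
    have : ∑ j ∈ Finset.range 1, genBinom p j * b ^ (p - (j : ℝ)) * t ^ (j : ℕ) = b ^ p := by
      simp [genBinom_zero]
    rw [this, add_comm (t ^ p)]
    exact real_rpow_add_le hb ht hp0.le hp1
  | succ k ih =>
    intro p hpk hpk1 b t hb ht
    have hp1 : (1 : ℝ) ≤ p := by
      have : (0 : ℝ) ≤ k := Nat.cast_nonneg k
      push_cast at hpk
      linarith
    -- the function whose nonpositivity we prove
    set F : ℝ → ℝ := fun s => (b + s) ^ p - s ^ p -
      ∑ j ∈ Finset.range (k + 2), genBinom p j * b ^ (p - j) * s ^ (j : ℕ) with hF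
    -- derivative
    have hasDeriv : ∀ s : ℝ, 0 ≤ s → HasDerivAt F
        (p * (b + s) ^ (p - 1) - p * s ^ (p - 1) -
          ∑ j ∈ Finset.range (k + 2),
            genBinom p j * b ^ (p - j) * ((j : ℝ) * s ^ (j - 1 : ℕ))) s := by
      intro s hs
      have hd1 : HasDerivAt (fun u : ℝ => (b + u) ^ p) (p * (b + s) ^ (p - 1)) s := by
        have hadd : HasDerivAt (fun u : ℝ => b + u) 1 s := (hasDerivAt_id s).const_add b
        have hr := Real.hasDerivAt_rpow_const (x := b + s) (p := p) (Or.inr hp1)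
        have hc := hr.comp s hadd; rw [mul_one] at hc; exact hc
      have hd2 : HasDerivAt (fun u : ℝ => u ^ p) (p * s ^ (p - 1)) s :=
        Real.hasDerivAt_rpow_const (Or.inr hp1)
      have hd3 : HasDerivAt (fun u : ℝ => ∑ j ∈ Finset.range (k + 2),
          genBinom p j * b ^ (p - j) * u ^ (j : ℕ))
          (∑ j ∈ Finset.range (k + 2),
            genBinom p j * b ^ (p - j) * ((j : ℝ) * s ^ (j - 1 : ℕ))) s := by
        apply HasDerivAt.fun_sum
        intro j _
        exact (hasDerivAt_pow j s).const_mul (genBinom p j * b ^ (p - (j : ℝ)))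
      exact (hd1.sub hd2).sub hd3
    -- derivative is nonpositive on [0, ∞)
    have derivNonpos : ∀ s : ℝ, 0 ≤ s →
        p * (b + s) ^ (p - 1) - p * s ^ (p - 1) -
          ∑ j ∈ Finset.range (k + 2),
            genBinom p j * b ^ (p - j) * ((j : ℝ) * s ^ (j - 1 : ℕ)) ≤ 0 := by
      intro s hs
      have hsum : ∑ j ∈ Finset.range (k + 2),
          genBinom p j * b ^ (p - j) * ((j : ℝ) * s ^ (j - 1 : ℕ)) =
          p * ∑ j ∈ Finset.range (k + 1),
            genBinom (p - 1) j * b ^ ((p - 1) - j) * s ^ (j : ℕ) := by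
        rw [Finset.sum_range_succ', Finset.mul_sum]
        simp only [Nat.cast_zero, mul_zero, zero_mul, add_zero, Nat.add_sub_cancel]
        apply Finset.sum_congr rfl
        intro j _
        have h1 : genBinom p (j + 1) * ((j : ℝ) + 1) = p * genBinom (p - 1) j := by
          rw [← genBinom_succ_mul p j]; ring
        push_cast
        rw [show p - ((j : ℝ) + 1) = p - 1 - (j : ℝ) by ring]
        calc genBinom p (j + 1) * b ^ (p - 1 - (j : ℝ)) * (((j : ℝ) + 1) * s ^ j)
            = (genBinom p (j + 1) * ((j : ℝ) + 1)) * b ^ (p - 1 - (j : ℝ)) * s ^ j := by ring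
          _ = p * (genBinom (p - 1) j * b ^ (p - 1 - (j : ℝ)) * s ^ j) := by rw [h1]; ring
      rw [hsum]
      have hih := ih (p - 1) (by push_cast at hpk ⊢; linarith)
        (by push_cast at hpk1 ⊢; linarith) b s hb hs
      have hp0 : 0 < p := by linarith
      nlinarith [hih, hp0]
    -- antitone on Ici 0
    have cont : ContinuousOn F (Set.Ici 0) := fun s hs =>
      ((hasDeriv s hs).continuousAt).continuousWithinAt
    have diff : DifferentiableOn ℝ F (interior (Set.Ici (0 : ℝ))) := by
      rw [interior_Ici]
      exact fun s hs => ((hasDeriv s (le_of_lt hs)).differentiableAt).differentiableWithinAt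
    have dnn : ∀ s ∈ interior (Set.Ici (0 : ℝ)), deriv F s ≤ 0 := by
      rw [interior_Ici]
      intro s hs
      rw [(hasDeriv s (le_of_lt hs)).deriv]
      exact derivNonpos s (le_of_lt hs)
    have anti : AntitoneOn F (Set.Ici 0) :=
      antitoneOn_of_deriv_nonpos (convex_Ici 0) cont diff dnn
    have hFt : F t ≤ F 0 := anti (Set.self_mem_Ici) (Set.mem_Ici.2 ht) ht
    have hF0 : F 0 = 0 := by
      have hsum0 : ∑ j ∈ Finset.range (k + 2),
          genBinom p j * b ^ (p - j) * (0 : ℝ) ^ (j : ℕ) = b ^ p := by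
        rw [Finset.sum_eq_single 0]
        · simp [genBinom_zero]
        · intro j _ hj
          simp [zero_pow hj]
        · simp
      have h0p : (0 : ℝ) ^ p = 0 := Real.zero_rpow (by linarith)
      simp only [hF, add_zero, h0p, hsum0, sub_zero]
      ring
    have : F t ≤ 0 := hFt.trans (le_of_eq hF0)
    simp only [hF] at this
    push_cast at this ⊢
    linarith

theorem stmt16 {X : Type*} [MeasurableSpace X] (μ : Measure X)
    (f : X → ℝ) (hf : Measurable f) (hf_nonneg : ∀ x, 0 ≤ f x)
    (p : ℝ) (hp : 1 < p) (lam : ℝ) (hlam : 0 ≤ lam)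
    (k : ℕ) (hk1 : (k : ℝ) < p) (hk2 : p ≤ k + 1)
    (h1 : IntegrableOn (fun x => (f x - lam) ^ p) {x | lam < f x} μ)
    (h2 : IntegrableOn (fun x => f x ^ p - lam ^ p) {x | lam < f x} μ)
    (h3 : ∀ j ∈ Finset.Icc 1 k,
      IntegrableOn (fun x => (f x - lam) ^ (j : ℕ)) {x | lam < f x} μ) :
    ∫ x in {x | lam < f x}, (f x - lam) ^ p ∂μ
      ≥ (∫ x in {x | lam < f x}, (f x ^ p - lam ^ p) ∂μ)
        - ∑ j ∈ Finset.Icc 1 k,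
            genBinom p j * lam ^ (p - j)
              * ∫ x in {x | lam < f x}, (f x - lam) ^ (j : ℕ) ∂μ := by
  set S := {x | lam < f x} with hSdef
  have hS : MeasurableSet S := measurableSet_lt measurable_const hf
  -- integrability of the sum part
  have hsum_int : IntegrableOn (fun x => ∑ j ∈ Finset.Icc 1 k,
      genBinom p j * lam ^ (p - j) * (f x - lam) ^ (j : ℕ)) S μ :=
    integrable_finset_sum _ (fun j hj => (h3 j hj).const_mul _)
  have hg_int : IntegrableOn (fun x => (f x - lam) ^ p + ∑ j ∈ Finset.Icc 1 k,
      genBinom p j * lam ^ (p - j) * (f x - lam) ^ (j : ℕ)) S μ := h1.add hsum_int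
  -- pointwise inequality on S
  have hpoint : ∀ x ∈ S, f x ^ p - lam ^ p ≤ (f x - lam) ^ p +
      ∑ j ∈ Finset.Icc 1 k, genBinom p j * lam ^ (p - j) * (f x - lam) ^ (j : ℕ) := by
    intro x hx
    have hx' : lam < f x := hx
    have ht : 0 ≤ f x - lam := by linarith
    have hkey := key_ineq k p hk1 hk2 lam (f x - lam) hlam ht
    rw [show lam + (f x - lam) = f x by ring] at hkey
    have hsplit : ∑ j ∈ Finset.range (k + 1),
        genBinom p j * lam ^ (p - j) * (f x - lam) ^ (j : ℕ) =
        lam ^ p + ∑ j ∈ Finset.Icc 1 k,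
          genBinom p j * lam ^ (p - j) * (f x - lam) ^ (j : ℕ) := by
      rw [Finset.sum_range_succ']
      have hIcc : ∑ j ∈ Finset.Icc 1 k,
          genBinom p j * lam ^ (p - j) * (f x - lam) ^ (j : ℕ) =
          ∑ j ∈ Finset.range k,
            genBinom p (j + 1) * lam ^ (p - ((j : ℕ) + 1 : ℕ)) * (f x - lam) ^ (j + 1 : ℕ) := by
        rw [← Finset.Ico_add_one_right_eq_Icc, Finset.sum_Ico_eq_sum_range]
        apply Finset.sum_congr rfl
        intro j _
        norm_num [add_comm 1 j]
      rw [hIcc]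
      simp [genBinom_zero, add_comm]
    rw [hsplit] at hkey
    linarith
  have hmono := setIntegral_mono_on h2 hg_int hS hpoint
  have heq : ∫ x in S, ((f x - lam) ^ p + ∑ j ∈ Finset.Icc 1 k,
      genBinom p j * lam ^ (p - j) * (f x - lam) ^ (j : ℕ)) ∂μ =
      (∫ x in S, (f x - lam) ^ p ∂μ) + ∑ j ∈ Finset.Icc 1 k,
        genBinom p j * lam ^ (p - j) * ∫ x in S, (f x - lam) ^ (j : ℕ) ∂μ := by
    rw [integral_add h1 hsum_int, integral_finset_sum _ (fun j hj => (h3 j hj).const_mul _)]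
    congr 1
    exact Finset.sum_congr rfl (fun j _ => integral_const_mul _ _)
  rw [heq] at hmono
  linarith
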